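/- Let Z = Σ_{i=2}^{n} Z_i where Z_i are independent Bernoulli variables with P(Z_i = 1) = 1/i, and let m ≥ n ≥ 2 and c ≥ 4. Then P(Z ≥ c·log₂ m) ≤ m^{−c}. -/

import Mathlib

open MeasureTheory ProbabilityTheory Finset Real

/-- Let `Z = Σ_{i=2}^{n} Z_i` with `Z_i` independent Bernoulli,
`P(Z_i = 1) = 1/i`, and let `m ≥ n ≥ 2`, `c ≥ 4`. Then
`P(Z ≥ c·log₂ m) ≤ m^{-c}`. -/
theorem harmonic_bernoulli_tail {Ω : Type*} [MeasurableSpace Ω]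
    (μ : Measure Ω) [IsProbabilityMeasure μ] (n m : ℕ) (hn : 2 ≤ n) (hnm : n ≤ m)
    (c : ℝ) (hc : 4 ≤ c)
    (Z : ℕ → Ω → ℝ)
    (hmeas : ∀ i, Measurable (Z i))
    (hindep : ProbabilityTheory.iIndepFun Z μ)
    (hBer : ∀ i ∈ Finset.Icc 2 n, ∀ ω, Z i ω = 0 ∨ Z i ω = 1)
    (hprob : ∀ i ∈ Finset.Icc 2 n, μ {ω | Z i ω = 1} = ENNReal.ofReal (1 / (i : ℝ))) :
    μ {ω | c * Real.logb 2 m ≤ ∑ i ∈ Finset.Icc 2 n, Z i ω}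
      ≤ ENNReal.ofReal ((m : ℝ) ^ (-c)) := by
  have hm2 : (2:ℝ) ≤ (m:ℝ) := by exact_mod_cast hn.trans hnm
  have hm1 : (1:ℝ) ≤ (m:ℝ) := by linarith
  have hmpos : (0:ℝ) < (m:ℝ) := by linarith
  set t : ℝ := Real.log 4 with ht_def
  have hexp_t : Real.exp t = 4 := Real.exp_log (by norm_num)
  have ht0 : 0 ≤ t := Real.log_nonneg (by norm_num)
  have hlog4 : Real.log 4 = 2 * Real.log 2 := by
    rw [show (4:ℝ) = 2^2 by norm_num, Real.log_pow]; push_cast; ring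
  set ε : ℝ := c * Real.logb 2 m with hε_def
  set S : Ω → ℝ := ∑ i ∈ Finset.Icc 2 n, Z i with hS_def
  have hSapp : ∀ ω, S ω = ∑ i ∈ Finset.Icc 2 n, Z i ω := by
    intro ω; simp [hS_def, Finset.sum_apply]
  -- bounds on Z i
  have hZ01 : ∀ i ∈ Finset.Icc 2 n, ∀ ω, 0 ≤ Z i ω ∧ Z i ω ≤ 1 := by
    intro i hi ω; rcases hBer i hi ω with h | h <;> simp [h]
  have hSm : Measurable S := by
    rw [show S = fun ω => ∑ i ∈ Finset.Icc 2 n, Z i ω from funext hSapp]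
    exact Finset.measurable_sum _ fun i _ => hmeas i
  have hSle : ∀ ω, S ω ≤ n := by
    intro ω
    rw [hSapp]
    calc ∑ i ∈ Finset.Icc 2 n, Z i ω ≤ ∑ i ∈ Finset.Icc 2 n, 1 := by
          exact Finset.sum_le_sum fun i hi => (hZ01 i hi ω).2
      _ = ((Finset.Icc 2 n).card : ℝ) := by simp
      _ ≤ (n : ℝ) := by
          rw [Nat.card_Icc]; exact_mod_cast Nat.sub_le n 1
  -- integrability of exp (t * S)
  have hint : Integrable (fun ω => Real.exp (t * S ω)) μ := by
    refine Integrable.mono' (integrable_const (Real.exp (t * n)))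
      ((hSm.const_mul t).exp.aestronglyMeasurable) ?_
    filter_upwards with ω
    rw [Real.norm_eq_abs, abs_of_pos (Real.exp_pos _)]
    exact Real.exp_le_exp.2 (mul_le_mul_of_nonneg_left (hSle ω) ht0)
  -- Chernoff
  have hcher := measure_ge_le_exp_mul_mgf (μ := μ) (X := S) ε ht0 hint
  -- mgf of each Z i
  have hmgf_i : ∀ i ∈ Finset.Icc 2 n, mgf (Z i) μ t = 1 + 3 / (i : ℝ) := by
    intro i hi
    have hipos : (0:ℝ) < (i : ℝ) := by
      have : 2 ≤ i := (Finset.mem_Icc.mp hi).1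
      exact_mod_cast Nat.lt_of_lt_of_le Nat.zero_lt_two this
    have hptwise : ∀ ω, Real.exp (t * Z i ω) = 1 + 3 * Z i ω := by
      intro ω; rcases hBer i hi ω with h | h <;> simp [h, hexp_t] <;> norm_num
    have hZint : Integrable (Z i) μ := by
      refine Integrable.mono' (integrable_const (1:ℝ))
        (hmeas i).aestronglyMeasurable ?_
      filter_upwards with ω
      rw [Real.norm_eq_abs, abs_le]
      constructor
      · linarith [(hZ01 i hi ω).1]
      · exact (hZ01 i hi ω).2
    have hEZ : ∫ ω, Z i ω ∂μ = 1 / (i : ℝ) := by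
      have hset : (Z i) ⁻¹' {1} = {ω | Z i ω = 1} := by ext ω; simp
      have hindic : ∀ ω, Z i ω = Set.indicator ((Z i) ⁻¹' {1}) (fun _ => (1:ℝ)) ω := by
        intro ω
        rcases hBer i hi ω with h | h <;> simp [Set.indicator, h]
      rw [integral_congr_ae (Filter.Eventually.of_forall hindic)]
      rw [integral_indicator_const (1:ℝ) ((hmeas i) (measurableSet_singleton 1))]
      rw [hset, measureReal_def, hprob i hi, ENNReal.toReal_ofReal (by positivity)]
      simp
    rw [mgf]
    rw [integral_congr_ae (Filter.Eventually.of_forall hptwise)]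
    rw [integral_add (integrable_const 1) (hZint.const_mul 3)]
    rw [integral_const_mul, hEZ]
    simp; ring
  -- mgf of sum
  have hmgfS : mgf S μ t = ∏ i ∈ Finset.Icc 2 n, mgf (Z i) μ t := by
    rw [hS_def]; exact hindep.mgf_sum hmeas _
  -- harmonic bound
  have hsum : ∑ i ∈ Finset.Icc 2 n, (1 / (i : ℝ)) ≤ Real.log m := by
    have h1 : (1:ℝ) + ∑ i ∈ Finset.Icc 2 n, (i : ℝ)⁻¹ = ∑ i ∈ Finset.Icc 1 n, (i : ℝ)⁻¹ := by
      have hins : insert 1 (Finset.Icc 2 n) = Finset.Icc 1 n := by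
        rw [show (2:ℕ) = 1 + 1 from rfl, Finset.Icc_add_one_left_eq_Ioc,
          Finset.Ioc_insert_left (by omega)]
      rw [← hins, Finset.sum_insert (by simp)]
      norm_num
    have h2 : ∑ i ∈ Finset.Icc 1 n, (i : ℝ)⁻¹ = (harmonic n : ℝ) := by
      rw [harmonic_eq_sum_Icc]; push_cast; ring
    have h3 : (harmonic n : ℝ) ≤ 1 + Real.log n := harmonic_le_one_add_log n
    have h4 : Real.log n ≤ Real.log m := by
      apply Real.log_le_log (by positivity) (by exact_mod_cast hnm)
    simp only [one_div]
    linarith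
  have hprod : ∏ i ∈ Finset.Icc 2 n, mgf (Z i) μ t ≤ Real.exp (3 * Real.log m) := by
    calc ∏ i ∈ Finset.Icc 2 n, mgf (Z i) μ t
        = ∏ i ∈ Finset.Icc 2 n, (1 + 3 / (i : ℝ)) := Finset.prod_congr rfl hmgf_i
      _ ≤ ∏ i ∈ Finset.Icc 2 n, Real.exp (3 / (i : ℝ)) := by
          apply Finset.prod_le_prod
          · intro i hi
            have : (2:ℕ) ≤ i := (Finset.mem_Icc.mp hi).1
            have : (0:ℝ) < (i:ℝ) := by exact_mod_cast Nat.lt_of_lt_of_le Nat.zero_lt_two this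
            positivity
          · intro i hi
            have := Real.add_one_le_exp (3 / (i : ℝ))
            linarith
      _ = Real.exp (∑ i ∈ Finset.Icc 2 n, 3 / (i : ℝ)) := by rw [Real.exp_sum]
      _ ≤ Real.exp (3 * Real.log m) := by
          apply Real.exp_le_exp.2
          have : ∑ i ∈ Finset.Icc 2 n, 3 / (i : ℝ)
              = 3 * ∑ i ∈ Finset.Icc 2 n, (1 / (i : ℝ)) := by
            rw [Finset.mul_sum]; apply Finset.sum_congr rfl; intro i _; ring
          rw [this]
          linarith [hsum]
  -- compute the exponent
  have hlog2pos : (0:ℝ) < Real.log 2 := Real.log_pos (by norm_num)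
  have htε : t * ε = 2 * c * Real.log m := by
    rw [ht_def, hε_def, hlog4, Real.logb, div_eq_mul_inv]
    field_simp
  have hfinal : (μ {ω | ε ≤ S ω}).toReal ≤ (m : ℝ) ^ (-c) := by
    calc (μ {ω | ε ≤ S ω}).toReal
        ≤ Real.exp (-t * ε) * mgf S μ t := hcher
      _ ≤ Real.exp (-t * ε) * Real.exp (3 * Real.log m) := by
          apply mul_le_mul_of_nonneg_left _ (Real.exp_pos _).le
          rw [hmgfS]; exact hprod
      _ = Real.exp ((3 - 2*c) * Real.log m) := by
          rw [← Real.exp_add, neg_mul, htε]; ring_nf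
      _ = (m : ℝ) ^ (3 - 2*c) := by
          rw [Real.rpow_def_of_pos hmpos]; ring_nf
      _ ≤ (m : ℝ) ^ (-c) := by
          apply Real.rpow_le_rpow_of_exponent_le hm1
          linarith
  have hset_eq : {ω | c * Real.logb 2 m ≤ ∑ i ∈ Finset.Icc 2 n, Z i ω}
      = {ω | ε ≤ S ω} := by
    ext ω; simp [hε_def, hSapp]
  rw [hset_eq]
  have hne : μ {ω | ε ≤ S ω} ≠ ⊤ := measure_ne_top μ _
  calc μ {ω | ε ≤ S ω} = ENNReal.ofReal ((μ {ω | ε ≤ S ω}).toReal) :=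
        (ENNReal.ofReal_toReal hne).symm
    _ ≤ ENNReal.ofReal ((m : ℝ) ^ (-c)) := ENNReal.ofReal_le_ofReal hfinal
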